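/- Let n ≥ 1, let Y ∈ ℂ^{n×n} be invertible, let V⁰ ∈ ℂⁿ, and let (V_*, s_*) be a base solution of diag(V_*)·conj(Y(V_* − V⁰)) = s_* with all entries of V_* nonzero. Let V ∈ ℂⁿ have all entries nonzero, let s ∈ ℂⁿ, set Δs = s − s_* and y = V_*/V − 1 (componentwise division). Then V satisfies diag(V)·conj(Y(V − V⁰)) = s if and only if y + ζ(s_*)·conj(y) = −η(Δs) − diag(η(Δs))·y − ζ(Δs)·conj(y) − diag(y)·ζ(s)·conj(y). -/

import Mathlib

open Matrix

/-- Entrywise complex conjugation of a matrix. -/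
def mconj {n : ℕ} (A : Matrix (Fin n) (Fin n) ℂ) : Matrix (Fin n) (Fin n) ℂ :=
  A.map (starRingEnd ℂ)

lemma mconj_mul {n : ℕ} (A B : Matrix (Fin n) (Fin n) ℂ) :
    mconj (A * B) = mconj A * mconj B := Matrix.map_mul

lemma mconj_one {n : ℕ} : mconj (1 : Matrix (Fin n) (Fin n) ℂ) = 1 :=
  Matrix.map_one _ (map_zero _) (map_one _)

lemma mconj_mconj {n : ℕ} (A : Matrix (Fin n) (Fin n) ℂ) : mconj (mconj A) = A := by
  ext i j; simp [mconj]

lemma mconj_diagonal {n : ℕ} (v : Fin n → ℂ) :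
    mconj (Matrix.diagonal v) = Matrix.diagonal (star v) := by
  ext i j
  by_cases h : i = j <;> simp [mconj, Matrix.diagonal_apply, h]

lemma mconj_mulVec_star {n : ℕ} (A : Matrix (Fin n) (Fin n) ℂ) (v : Fin n → ℂ) :
    mconj A *ᵥ star v = star (A *ᵥ v) := by
  funext i
  simp [mconj, Matrix.mulVec, dotProduct, star_sum, star_mul', mul_comm]

lemma diagonal_mulVec' {n : ℕ} (v x : Fin n → ℂ) :
    Matrix.diagonal v *ᵥ x = v * x :=
  funext fun i => Matrix.mulVec_diagonal v x i

lemma isUnit_diag {n : ℕ} {v : Fin n → ℂ} (hv : ∀ i, v i ≠ 0) :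
    IsUnit (Matrix.diagonal v) := by
  refine (Matrix.isUnit_iff_isUnit_det _).mpr (Matrix.isUnit_det_of_right_inverse (B := Matrix.diagonal fun i => (v i)⁻¹) ?_)
  rw [Matrix.diagonal_mul_diagonal]
  ext i j
  rcases eq_or_ne i j with h | h
  · subst h; simp [mul_inv_cancel₀ (hv i)]
  · simp [Matrix.diagonal_apply_ne _ h, Matrix.one_apply_ne h]

theorem power_flow_rewrite {n : ℕ} (hn : 1 ≤ n)
    (Y : Matrix (Fin n) (Fin n) ℂ) (hY : IsUnit Y)
    (V0 Vs ss : Fin n → ℂ)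
    (hVs : ∀ i, Vs i ≠ 0)
    (hbase : Matrix.diagonal Vs *ᵥ star (Y *ᵥ (Vs - V0)) = ss)
    (Z : Matrix (Fin n) (Fin n) ℂ)
    (hZ : Z = (Matrix.diagonal (star Vs))⁻¹ * (mconj Y)⁻¹ * (Matrix.diagonal Vs)⁻¹)
    (ζ : (Fin n → ℂ) → Matrix (Fin n) (Fin n) ℂ)
    (hζ : ∀ w, ζ w = mconj Z * Matrix.diagonal (star w))
    (η : (Fin n → ℂ) → (Fin n → ℂ))
    (hη : ∀ w, η w = star (Z *ᵥ w))
    (V : Fin n → ℂ) (hV : ∀ i, V i ≠ 0)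
    (s : Fin n → ℂ)
    (Δs : Fin n → ℂ) (hΔs : Δs = s - ss)
    (y : Fin n → ℂ) (hy : y = fun i => Vs i / V i - 1) :
    Matrix.diagonal V *ᵥ star (Y *ᵥ (V - V0)) = s ↔
      y + ζ ss *ᵥ star y =
        -η Δs - Matrix.diagonal (η Δs) *ᵥ y - ζ Δs *ᵥ star y
          - (Matrix.diagonal y * ζ s) *ᵥ star y := by
  classical
  have hstarVs : ∀ i, star (Vs i) ≠ 0 := fun i => star_ne_zero.mpr (hVs i)
  have hstarV : ∀ i, star (V i) ≠ 0 := fun i => star_ne_zero.mpr (hV i)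
  -- invertibility facts
  have hYdet : IsUnit Y.det := (Matrix.isUnit_iff_isUnit_det Y).mp hY
  have hBunit : IsUnit (mconj Y) := (Matrix.isUnit_iff_isUnit_det _).mpr (Matrix.isUnit_det_of_right_inverse
    (B := mconj Y⁻¹) (by rw [← mconj_mul, Matrix.mul_nonsing_inv Y hYdet, mconj_one]))
  have hAunit : IsUnit (Matrix.diagonal (star Vs)) := isUnit_diag hstarVs
  have hCunit : IsUnit (Matrix.diagonal Vs) := isUnit_diag hVs
  have hAd := (Matrix.isUnit_iff_isUnit_det _).mp hAunit
  have hBd := (Matrix.isUnit_iff_isUnit_det _).mp hBunit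
  have hCd := (Matrix.isUnit_iff_isUnit_det _).mp hCunit
  set M : Matrix (Fin n) (Fin n) ℂ := mconj Z with hM
  set N : Matrix (Fin n) (Fin n) ℂ :=
    Matrix.diagonal (star Vs) * Y * Matrix.diagonal Vs with hN
  -- Z * (C * B * A) = 1 and (C * B * A) * Z = 1
  have hZN : Z * (Matrix.diagonal Vs * mconj Y * Matrix.diagonal (star Vs)) = 1 := by
    rw [hZ]
    simp only [Matrix.mul_assoc]
    rw [Matrix.nonsing_inv_mul_cancel_left _ _ hCd,
      Matrix.nonsing_inv_mul_cancel_left _ _ hBd,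
      Matrix.nonsing_inv_mul _ hAd]
  have hNZ : (Matrix.diagonal Vs * mconj Y * Matrix.diagonal (star Vs)) * Z = 1 := by
    rw [hZ]
    simp only [Matrix.mul_assoc]
    rw [Matrix.mul_nonsing_inv_cancel_left _ _ hAd,
      Matrix.mul_nonsing_inv_cancel_left _ _ hBd,
      Matrix.mul_nonsing_inv _ hCd]
  have hMN : M * N = 1 := by
    have h := congrArg mconj hZN
    rw [mconj_mul, mconj_mul, mconj_mul, mconj_diagonal, mconj_diagonal,
      mconj_mconj, mconj_one, star_star] at h
    exact h
  have hNM : N * M = 1 := by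
    have h := congrArg mconj hNZ
    rw [mconj_mul, mconj_mul, mconj_mul, mconj_diagonal, mconj_diagonal,
      mconj_mconj, mconj_one, star_star] at h
    exact h
  -- the common vector equation
  set F : Fin n → ℂ := Y *ᵥ (V - V0) with hF
  set G : Fin n → ℂ := Y *ᵥ (Vs - V0) with hGdef
  set w : Fin n → ℂ := fun i => star (s i) * star (Vs i) / star (V i) - star (ss i) with hw
  set t : Fin n → ℂ := fun i => (V i - Vs i) / Vs i with ht
  have hFG : Y *ᵥ (V - Vs) = F - G := by
    rw [hF, hGdef, ← Matrix.mulVec_sub, sub_sub_sub_cancel_right]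
  have hG : ∀ i, G i = star (ss i) / star (Vs i) := by
    intro i
    have hb := congrFun hbase i
    rw [Matrix.mulVec_diagonal] at hb
    have hb' := congrArg star hb
    rw [star_mul'] at hb'
    simp only [Pi.star_apply, star_star] at hb'
    rw [eq_div_iff (hstarVs i), mul_comm]
    exact hb'
  -- Step 1: power flow equation for (V, s)
  have step1 : (Matrix.diagonal V *ᵥ star F = s) ↔
      (fun i => star (Vs i) * (F i - G i)) = w := by
    rw [funext_iff, funext_iff]
    refine forall_congr' fun i => ?_
    rw [Matrix.mulVec_diagonal]
    simp only [Pi.star_apply]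
    rw [hG i, hw]
    have key : star (Vs i) * (F i - star (ss i) / star (Vs i))
        = star (Vs i) * F i - star (ss i) := by
      rw [mul_sub, ← mul_div_assoc, mul_div_cancel_left₀ _ (hstarVs i)]
    constructor
    · intro h
      have h' : star (V i) * F i = star (s i) := by
        have := congrArg star h
        rw [star_mul', star_star] at this
        exact this
      rw [key, sub_left_inj, eq_div_iff (hstarV i)]
      linear_combination star (Vs i) * h'
    · intro h
      rw [key, sub_left_inj, eq_div_iff (hstarV i)] at h
      have h' : star (V i) * F i = star (s i) :=
        mul_left_cancel₀ (hstarVs i) (by linear_combination h)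
      have := congrArg star h'
      rw [star_mul', star_star, star_star] at this
      linear_combination this
  -- Rewrite the target using M
  have hstars : star s = star ss + star Δs := by
    rw [hΔs]; funext i; simp
  set a : Fin n → ℂ := star ss * star y with ha
  set b : Fin n → ℂ := star Δs with hb
  set c : Fin n → ℂ := star Δs * star y with hc
  have hζss : ζ ss *ᵥ star y = M *ᵥ a := by
    rw [hζ, ← Matrix.mulVec_mulVec, diagonal_mulVec', ha]
  have hηΔs : η Δs = M *ᵥ b := by
    rw [hη, hb, hM, mconj_mulVec_star]
  have hζΔs : ζ Δs *ᵥ star y = M *ᵥ c := by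
    rw [hζ, ← Matrix.mulVec_mulVec, diagonal_mulVec', hc]
  have hζs : (Matrix.diagonal y * ζ s) *ᵥ star y = y * (M *ᵥ (a + c)) := by
    rw [hζ, ← Matrix.mul_assoc, Matrix.mul_assoc, ← Matrix.mulVec_mulVec,
      ← Matrix.mulVec_mulVec, diagonal_mulVec', diagonal_mulVec', hstars]
    congr 1
    rw [ha, hc]
    rw [hb]; congr 1; ring
  have hdiagη : Matrix.diagonal (η Δs) *ᵥ y = (M *ᵥ b) * y := by
    rw [hηΔs, diagonal_mulVec']
  -- Step 2: the quadratic equation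
  have step2 :
      (y + ζ ss *ᵥ star y =
        -η Δs - Matrix.diagonal (η Δs) *ᵥ y - ζ Δs *ᵥ star y
          - (Matrix.diagonal y * ζ s) *ᵥ star y) ↔
      M *ᵥ (a + b + c) = t := by
    rw [hζss, hdiagη, hζΔs, hζs, hηΔs]
    rw [funext_iff, funext_iff]
    refine forall_congr' fun i => ?_
    have hP : (M *ᵥ (a + b + c)) i = (M *ᵥ a) i + (M *ᵥ b) i + (M *ᵥ c) i := by
      rw [Matrix.mulVec_add, Matrix.mulVec_add]; simp
    have hAC : (M *ᵥ (a + c)) i = (M *ᵥ a) i + (M *ᵥ c) i := by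
      rw [Matrix.mulVec_add]; simp
    simp only [Pi.add_apply, Pi.sub_apply, Pi.neg_apply, Pi.mul_apply]
    rw [hP, hAC]
    set P := (M *ᵥ a) i
    set Q := (M *ᵥ b) i
    set R := (M *ᵥ c) i
    have hyi : y i = Vs i / V i - 1 := by rw [hy]
    have hti : t i = (V i - Vs i) / Vs i := by rw [ht]
    rw [hyi, hti]
    constructor
    · intro h
      field_simp [hV i, hVs i] at h ⊢
      linear_combination h
    · intro h
      field_simp [hV i, hVs i] at h ⊢
      linear_combination h
  -- Step 3: invert M
  have step3 : (M *ᵥ (a + b + c) = t) ↔ (a + b + c = N *ᵥ t) := by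
    constructor
    · intro h
      have : N *ᵥ (M *ᵥ (a + b + c)) = N *ᵥ t := by rw [h]
      rwa [Matrix.mulVec_mulVec, hNM, Matrix.one_mulVec] at this
    · intro h
      have : M *ᵥ (a + b + c) = M *ᵥ (N *ᵥ t) := by rw [h]
      rwa [Matrix.mulVec_mulVec, hMN, Matrix.one_mulVec] at this
  -- compute N *ᵥ t
  have hdiagt : Matrix.diagonal Vs *ᵥ t = V - Vs := by
    funext i
    rw [Matrix.mulVec_diagonal, ht]
    simp only [Pi.sub_apply]
    exact mul_div_cancel₀ _ (hVs i)
  have hNt : N *ᵥ t = fun i => star (Vs i) * (F i - G i) := by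
    rw [hN, ← Matrix.mulVec_mulVec, ← Matrix.mulVec_mulVec, hdiagt, hFG]
    funext i
    rw [Matrix.mulVec_diagonal]
    simp
  -- compute a + b + c
  have habc : a + b + c = w := by
    funext i
    simp only [ha, hb, hc, hw, Pi.add_apply, Pi.mul_apply, Pi.star_apply]
    have hyi : star (y i) = star (Vs i) / star (V i) - 1 := by
      rw [hy]; simp [star_div₀]
    have hΔi : star (Δs i) = star (s i) - star (ss i) := by
      rw [hΔs]; simp
    rw [hyi, hΔi]
    field_simp
    ring
  rw [step1, step2, step3, hNt, habc, eq_comm]
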